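/- Let p be a prime, n ≥ 2, and let G be a group with a, b ∈ G satisfying a^{p^n} = 1 and b a b^{-1} = a^{1 + p^{n−1}}. Then for all integers α_1, α_2 and all natural numbers β_1, β_2, one has [a^{α_1} b^{β_1}, a^{α_2} b^{β_2}] = a^{p^{n−1}(α_2 β_1 − α_1 β_2)}. -/

import Mathlib

open scoped commutatorElement

/-- Let `p` be a prime, `n ≥ 2`, and suppose `a^(p^n) = 1` and
`b a b⁻¹ = a^(1 + p^{n−1})`. Then
`[a^α₁ b^β₁, a^α₂ b^β₂] = a^(p^{n−1}(α₂β₁ − α₁β₂))`. -/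
theorem commutator_class_two_metacyclic
    {p : ℕ} (hp : p.Prime) {G : Type*} [Group G] (a b : G) (n : ℕ) (hn : 2 ≤ n)
    (ha : a ^ p ^ n = 1) (h : b * a * b⁻¹ = a ^ (1 + p ^ (n - 1)))
    (α₁ α₂ : ℤ) (β₁ β₂ : ℕ) :
    ⁅a ^ α₁ * b ^ β₁, a ^ α₂ * b ^ β₂⁆
      = a ^ ((p : ℤ) ^ (n - 1) * (α₂ * (β₁ : ℤ) - α₁ * (β₂ : ℤ))) := by
  set q : ℤ := (p : ℤ) ^ (n - 1) with hq
  have haz : a ^ ((p : ℤ) ^ n) = 1 := by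
    have := ha
    rw [← zpow_natCast a (p ^ n)] at this
    rw [show ((p : ℤ) ^ n) = ((p ^ n : ℕ) : ℤ) by push_cast; ring]
    exact this
  have hq2 : a ^ (q * q) = 1 := by
    have hqe : q * q = (p : ℤ) ^ (n - 2) * (p : ℤ) ^ n := by
      rw [hq, ← pow_add, ← pow_add]
      congr 1
      omega
    rw [hqe, mul_comm, zpow_mul, haz, one_zpow]
  have hb1 : ∀ α : ℤ, b * a ^ α * b⁻¹ = a ^ (α * (1 + q)) := by
    intro α
    rw [← conj_zpow, h, ← zpow_natCast a (1 + p ^ (n - 1)), ← zpow_mul]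
    congr 1
    push_cast [hq]
    ring
  have hconj : ∀ (β : ℕ) (α : ℤ), b ^ β * a ^ α * (b ^ β)⁻¹ = a ^ (α * (1 + β * q)) := by
    intro β
    induction β with
    | zero => intro α; simp
    | succ k ih =>
      intro α
      have hb : b ^ (k + 1) = b * b ^ k := by rw [pow_succ']
      rw [hb, mul_inv_rev]
      calc b * b ^ k * a ^ α * ((b ^ k)⁻¹ * b⁻¹)
          = b * (b ^ k * a ^ α * (b ^ k)⁻¹) * b⁻¹ := by group
        _ = b * a ^ (α * (1 + k * q)) * b⁻¹ := by rw [ih]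
        _ = a ^ (α * (1 + k * q) * (1 + q)) := hb1 _
        _ = a ^ (α * (1 + ((k : ℕ) + 1 : ℕ) * q)) := by
            rw [show α * (1 + k * q) * (1 + q)
                = α * (1 + ((k : ℤ) + 1) * q) + (q * q) * (α * k) by ring,
              zpow_add, zpow_mul a (q * q), hq2, one_zpow, mul_one]
            norm_cast
  have hpush' : ∀ (β : ℕ) (α : ℤ) (x : G),
      b ^ β * (a ^ α * x) = a ^ (α * (1 + β * q)) * (b ^ β * x) := by
    intro β α x
    have := hconj β α
    rw [mul_inv_eq_iff_eq_mul] at this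
    rw [← mul_assoc, this, mul_assoc]
  have hbb : ∀ (γ₁ γ₂ : ℕ) (x : G), b ^ γ₁ * (b ^ γ₂ * ((b ^ γ₁)⁻¹ * x)) = b ^ γ₂ * x := by
    intro γ₁ γ₂ x
    rw [← mul_assoc, ← mul_assoc, pow_mul_comm, mul_assoc, mul_assoc, mul_inv_cancel_left]
  rw [commutatorElement_def, mul_inv_rev, mul_inv_rev, ← zpow_neg, ← zpow_neg]
  simp only [mul_assoc, hpush', hbb, mul_inv_cancel_left, ← zpow_add]
  congr 1
  push_cast
  ring
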